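/- arXiv:1109.5558 — 3 statements merged into one kernel-verified Lean document; each statement's English description precedes it below -/
import Mathlib

section
/- Fix an integer k ≥ 1 and for i, j, m ∈ {0,...,k} define the fusion coefficient N_{ij}^m to be 1 if m ≡ i+j (mod 2) and |i−j| ≤ m ≤ min(i+j, 2k−i−j), and 0 otherwise. Then for all i, j, l, m ∈ {0,...,k}: ∑_{s=0}^{k} N_{ij}^s · N_{sl}^m = ∑_{s=0}^{k} N_{jl}^s · N_{is}^m. -/
set_option maxHeartbeats 4000000

/-- The `sl(2)` level-`k` Verlinde fusion coefficient `N_{ij}^m`: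
`1` if `m ≡ i+j (mod 2)` and `|i−j| ≤ m ≤ min(i+j, 2k−i−j)`, else `0`. -/
def fusionN (k i j m : ℕ) : ℕ :=
  if m % 2 = (i + j) % 2 ∧ i ≤ j + m ∧ j ≤ i + m ∧ m ≤ i + j ∧ i + j + m ≤ 2 * k
  then 1 else 0

/-- Counting integers of parity `p` in `[a,b] ∩ [0,n)`. -/
lemma sumcnt (p a b : ℕ) (hp : p < 2) (n : ℕ) :
    ∑ s ∈ Finset.range n, (if s % 2 = p ∧ a ≤ s ∧ s ≤ b then 1 else 0)
      = (min n (b+1) + 1 - p)/2 - (min (min n (b+1)) a + 1 - p)/2 := by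
  induction n with
  | zero => simp
  | succ n ih =>
    rw [Finset.sum_range_succ, ih]
    split_ifs with h <;> omega

/-- Min-free version of `sumcnt` when the upper bound is inside the range. -/
lemma sumcnt' (p a b n : ℕ) (hp : p < 2) (hb : b < n) :
    ∑ s ∈ Finset.range n, (if s % 2 = p ∧ a ≤ s ∧ s ≤ b then 1 else 0)
      = (b + 2 - p)/2 - (a + 1 - p)/2 := by
  rw [sumcnt p a b hp n]
  omega

/-- The two fusion channels have matching interval data: `B - A = D - C`. -/
lemma fusion_key (k i j l m A B C D : ℕ)
    (hA1 : i ≤ j + A) (hA2 : j ≤ i + A) (hA3 : l ≤ m + A) (hA4 : m ≤ l + A)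
    (hB1 : B ≤ i + j) (hB2 : B ≤ l + m) (hB3 : i + j + B ≤ 2*k) (hB4 : l + m + B ≤ 2*k)
    (hC1 : j ≤ l + C) (hC2 : l ≤ j + C) (hC3 : i ≤ m + C) (hC4 : m ≤ i + C)
    (hD1 : D ≤ j + l) (hD2 : D ≤ i + m) (hD3 : j + l + D ≤ 2*k) (hD4 : i + m + D ≤ 2*k)
    (hA0 : A = i - j ∨ A = j - i ∨ A = l - m ∨ A = m - l)
    (hB0 : B = i + j ∨ B = l + m ∨ B + i + j = 2*k ∨ B + l + m = 2*k)
    (hC0 : C = j - l ∨ C = l - j ∨ C = i - m ∨ C = m - i)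
    (hD0 : D = j + l ∨ D = i + m ∨ D + j + l = 2*k ∨ D + i + m = 2*k) :
    B + C = A + D := by
  have key1 : B + C ≤ A + D := by
    clear hA0 hB0
    rcases hC0 with h|h|h|h <;> rcases hD0 with h'|h'|h'|h' <;> omega
  have key2 : A + D ≤ B + C := by
    clear hC0 hD0
    rcases hA0 with h|h|h|h <;> rcases hB0 with h'|h'|h'|h' <;> omega
  omega

/-- Associativity of the level-`k` `sl(2)` fusion ring. -/
theorem stmt_2 (k : ℕ) (hk : 1 ≤ k) (i j l m : ℕ)
    (hi : i ≤ k) (hj : j ≤ k) (hl : l ≤ k) (hm : m ≤ k) :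
    ∑ s ∈ Finset.range (k + 1), fusionN k i j s * fusionN k s l m
      = ∑ s ∈ Finset.range (k + 1), fusionN k j l s * fusionN k i s m := by
  by_cases hpar : (i + j + l + m) % 2 = 0
  · obtain ⟨A, hA1, hA2, hA3, hA4, hA0⟩ :
        ∃ A, i ≤ j + A ∧ j ≤ i + A ∧ l ≤ m + A ∧ m ≤ l + A ∧
          (A = i - j ∨ A = j - i ∨ A = l - m ∨ A = m - l) := by
      refine ⟨max (max (i-j) (j-i)) (max (l-m) (m-l)), ?_, ?_, ?_, ?_, ?_⟩ <;> omega
    obtain ⟨B, hB1, hB2, hB3, hB4, hB0⟩ :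
        ∃ B, B ≤ i + j ∧ B ≤ l + m ∧ i + j + B ≤ 2*k ∧ l + m + B ≤ 2*k ∧
          (B = i + j ∨ B = l + m ∨ B + i + j = 2*k ∨ B + l + m = 2*k) := by
      clear hA0
      refine ⟨min (min (i+j) (l+m)) (min (2*k-i-j) (2*k-l-m)), ?_, ?_, ?_, ?_, ?_⟩ <;> omega
    obtain ⟨C, hC1, hC2, hC3, hC4, hC0⟩ :
        ∃ C, j ≤ l + C ∧ l ≤ j + C ∧ i ≤ m + C ∧ m ≤ i + C ∧
          (C = j - l ∨ C = l - j ∨ C = i - m ∨ C = m - i) := by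
      clear hA0 hB0
      refine ⟨max (max (j-l) (l-j)) (max (i-m) (m-i)), ?_, ?_, ?_, ?_, ?_⟩ <;> omega
    obtain ⟨D, hD1, hD2, hD3, hD4, hD0⟩ :
        ∃ D, D ≤ j + l ∧ D ≤ i + m ∧ j + l + D ≤ 2*k ∧ i + m + D ≤ 2*k ∧
          (D = j + l ∨ D = i + m ∨ D + j + l = 2*k ∨ D + i + m = 2*k) := by
      clear hA0 hB0 hC0
      refine ⟨min (min (j+l) (i+m)) (min (2*k-j-l) (2*k-i-m)), ?_, ?_, ?_, ?_, ?_⟩ <;> omega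
    have key := fusion_key k i j l m A B C D hA1 hA2 hA3 hA4 hB1 hB2 hB3 hB4
      hC1 hC2 hC3 hC4 hD1 hD2 hD3 hD4 hA0 hB0 hC0 hD0
    have pA : A % 2 = (i+j) % 2 := by
      clear hB0 hC0 hD0; rcases hA0 with h|h|h|h <;> omega
    have pB : B % 2 = (i+j) % 2 := by
      clear hA0 hC0 hD0; rcases hB0 with h|h|h|h <;> omega
    have pC : C % 2 = (j+l) % 2 := by
      clear hA0 hB0 hD0; rcases hC0 with h|h|h|h <;> omega
    have pD : D % 2 = (j+l) % 2 := by
      clear hA0 hB0 hC0; rcases hD0 with h|h|h|h <;> omega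
    have hBk : B < k + 1 := by clear hA0 hB0 hC0 hD0; omega
    have hDk : D < k + 1 := by clear hA0 hB0 hC0 hD0; omega
    have hL : ∀ s ∈ Finset.range (k+1), fusionN k i j s * fusionN k s l m
        = (if s % 2 = (i+j) % 2 ∧ A ≤ s ∧ s ≤ B then 1 else 0) := by
      clear hC0 hD0 pA pB pC pD key
      intro s _
      simp only [fusionN]
      split_ifs <;> omega
    have hR : ∀ s ∈ Finset.range (k+1), fusionN k j l s * fusionN k i s m
        = (if s % 2 = (j+l) % 2 ∧ C ≤ s ∧ s ≤ D then 1 else 0) := by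
      clear hA0 hB0 pA pB pC pD key hL
      intro s _
      simp only [fusionN]
      split_ifs <;> omega
    rw [Finset.sum_congr rfl hL, Finset.sum_congr rfl hR,
      sumcnt' _ _ _ _ (Nat.mod_lt _ two_pos) hBk,
      sumcnt' _ _ _ _ (Nat.mod_lt _ two_pos) hDk]
    clear hA0 hB0 hC0 hD0 hA1 hA2 hA3 hA4 hB1 hB2 hB3 hB4 hC1 hC2 hC3 hC4
      hD1 hD2 hD3 hD4 hpar hi hj hl hm hk hL hR hBk hDk
    omega
  · rw [Finset.sum_eq_zero, Finset.sum_eq_zero]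
    · intro s _
      simp only [fusionN]
      split_ifs <;> omega
    · intro s _
      simp only [fusionN]
      split_ifs <;> omega
end

section
/- Let k ≥ 1 be an integer, θ = π/(k+2), and set d_j = sin((j+1)θ) for j ∈ ℤ. Then for all i, j ∈ {0,...,k} with i+j ≤ k: d_i · d_j = sin(θ) · ∑_{s=0}^{min(i,j)} d_{i+j−2s}; and for i+j ≥ k: d_i · d_j = sin(θ) · ∑_{s=i+j−k}^{min(i,j)} d_{i+j−2s}. -/
/-- `d_j = sin((j+1)π/(k+2))` satisfies the level-`k` `sl(2)` fusion-rule
product formula. -/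
theorem stmt_4 (k : ℕ) (hk : 1 ≤ k) (i j : ℕ) (hi : i ≤ k) (hj : j ≤ k) :
    (i + j ≤ k →
      Real.sin (((i : ℝ) + 1) * (Real.pi / ((k : ℝ) + 2))) *
        Real.sin (((j : ℝ) + 1) * (Real.pi / ((k : ℝ) + 2)))
      = Real.sin (Real.pi / ((k : ℝ) + 2)) *
        ∑ s ∈ Finset.range (min i j + 1),
          Real.sin (((i + j - 2 * s : ℕ) + 1 : ℝ) * (Real.pi / ((k : ℝ) + 2)))) ∧
    (k ≤ i + j →
      Real.sin (((i : ℝ) + 1) * (Real.pi / ((k : ℝ) + 2))) *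
        Real.sin (((j : ℝ) + 1) * (Real.pi / ((k : ℝ) + 2)))
      = Real.sin (Real.pi / ((k : ℝ) + 2)) *
        ∑ s ∈ Finset.Icc (i + j - k) (min i j),
          Real.sin (((i + j - 2 * s : ℕ) + 1 : ℝ) * (Real.pi / ((k : ℝ) + 2)))) := by
  set θ : ℝ := Real.pi / ((k : ℝ) + 2) with hθ
  have hprod : ∀ x y : ℝ, Real.sin x * Real.sin y
      = (Real.cos (x - y) - Real.cos (x + y)) / 2 := fun x y => by
    rw [Real.cos_sub, Real.cos_add]; ring
  have key : ∀ m : ℝ, Real.sin θ * Real.sin ((m + 1) * θ)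
      = (Real.cos (m * θ) - Real.cos ((m + 2) * θ)) / 2 := fun m => by
    rw [show m * θ = (m + 1) * θ - θ by ring,
        show (m + 2) * θ = (m + 1) * θ - θ + 2 * θ by ring,
        show (m + 1) * θ - θ + 2 * θ = (m + 1) * θ + θ by ring,
        Real.cos_sub, Real.cos_add]; ring
  set F : ℕ → ℝ := fun s => Real.cos (((i : ℝ) + j + 2 - 2 * s) * θ) with hF
  have term : ∀ s : ℕ, 2 * s ≤ i + j →
      Real.sin θ * Real.sin (((i + j - 2 * s : ℕ) + 1 : ℝ) * θ)
        = (F (s + 1) - F s) / 2 := by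
    intro s hs
    have hc : ((i + j - 2 * s : ℕ) : ℝ) = (i : ℝ) + j - 2 * s := by
      have := Nat.cast_sub hs (R := ℝ)
      push_cast at this ⊢
      linarith
    rw [hc, key]
    simp only [hF]
    push_cast
    ring_nf
  have hLHS : Real.sin (((i : ℝ) + 1) * θ) * Real.sin (((j : ℝ) + 1) * θ)
      = (Real.cos (((i : ℝ) - j) * θ) - Real.cos (((i : ℝ) + j + 2) * θ)) / 2 := by
    rw [hprod, show ((i : ℝ) + 1) * θ - ((j : ℝ) + 1) * θ = ((i : ℝ) - j) * θ by ring,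
        show ((i : ℝ) + 1) * θ + ((j : ℝ) + 1) * θ = ((i : ℝ) + j + 2) * θ by ring]
  have hmin : F (min i j + 1) = Real.cos (((i : ℝ) - j) * θ) := by
    rcases le_total i j with h | h
    · rw [min_eq_left h]
      simp only [hF]
      push_cast
      rw [show (i : ℝ) + j + 2 - 2 * (i + 1) = -(((i : ℝ) - j)) by ring,
        neg_mul, Real.cos_neg]
    · rw [min_eq_right h]
      simp only [hF]
      push_cast
      congr 1
      ring
  constructor
  · intro hij
    rw [Finset.mul_sum]
    have hsum : ∑ s ∈ Finset.range (min i j + 1),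
        Real.sin θ * Real.sin (((i + j - 2 * s : ℕ) + 1 : ℝ) * θ)
        = ∑ s ∈ Finset.range (min i j + 1), (F (s + 1) - F s) / 2 := by
      refine Finset.sum_congr rfl fun s hs => ?_
      rw [Finset.mem_range] at hs
      exact term s (by omega)
    rw [hsum, ← Finset.sum_div, Finset.sum_range_sub F, hLHS, hmin]
    simp only [hF]
    norm_num
  · intro hij
    have hale : i + j - k ≤ min i j := by omega
    rw [Finset.mul_sum, ← Finset.Ico_add_one_right_eq_Icc, Finset.sum_Ico_eq_sum_range]
    have hsum : ∑ s ∈ Finset.range (min i j + 1 - (i + j - k)),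
        Real.sin θ * Real.sin (((i + j - 2 * ((i + j - k) + s) : ℕ) + 1 : ℝ) * θ)
        = ∑ s ∈ Finset.range (min i j + 1 - (i + j - k)),
            (F ((i + j - k) + s + 1) - F ((i + j - k) + s)) / 2 := by
      refine Finset.sum_congr rfl fun s hs => ?_
      rw [Finset.mem_range] at hs
      exact term _ (by omega)
    rw [hsum, ← Finset.sum_div,
        show (fun s => F ((i + j - k) + s + 1) - F ((i + j - k) + s))
          = (fun s => (fun t => F ((i + j - k) + t)) (s + 1)
              - (fun t => F ((i + j - k) + t)) s) from rfl,
        Finset.sum_range_sub (fun t => F ((i + j - k) + t))]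
    have h1 : (i + j - k) + (min i j + 1 - (i + j - k)) = min i j + 1 := by omega
    rw [h1, hmin, hLHS]
    have h2 : F ((i + j - k) + 0) = Real.cos (((i : ℝ) + j + 2) * θ) := by
      simp only [hF, Nat.add_zero]
      have hc : ((i + j - k : ℕ) : ℝ) = (i : ℝ) + j - k := by
        have := Nat.cast_sub hij (R := ℝ); push_cast at this ⊢; linarith
      have hk2 : ((k : ℝ) + 2) ≠ 0 := by positivity
      rw [hc, show ((i : ℝ) + j + 2 - 2 * ((i : ℝ) + j - k)) * θ
            = 2 * Real.pi - ((i : ℝ) + j + 2) * θ by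
          rw [hθ]; field_simp; ring,
        Real.cos_sub, Real.cos_two_pi, Real.sin_two_pi]
      ring
    rw [h2]
end

section
/- Let A be a finite abelian group with a quadratic form q : A → ℂˣ (i.e., q(−x) = q(x) and b(x,y) := q(x+y)q(x)⁻¹q(y)⁻¹ is biadditive). Suppose the radical R = {x ∈ A : b(x,y) = 1 for all y ∈ A} equals {0, u} where u has order 2 and q(u) = −1. Then there exists a subgroup B ≤ A with A = B ⊕ ⟨u⟩ (internal direct sum) such that the restriction of b to B is non-degenerate. -/
/-- If the radical of a quadratic form `q` on a finite abelian group `A` is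
`{0, u}` with `u` of order `2` and `q(u) = −1`, then `A = B ⊕ ⟨u⟩` with the
associated bicharacter non-degenerate on `B`. -/
theorem stmt_17 {A : Type*} [AddCommGroup A] [Finite A]
    (q : A → ℂˣ) (hq : ∀ x : A, q (-x) = q x)
    (b : A → A → ℂˣ) (hb : ∀ x y : A, b x y = q (x + y) * (q x)⁻¹ * (q y)⁻¹)
    (hadd1 : ∀ x x' y : A, b (x + x') y = b x y * b x' y)
    (hadd2 : ∀ x y y' : A, b x (y + y') = b x y * b x y')
    (u : A) (hu0 : u ≠ 0) (hu2 : u + u = 0) (hqu : (q u : ℂ) = -1)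
    (hrad : ∀ x : A, (∀ y : A, b x y = 1) ↔ (x = 0 ∨ x = u)) :
    ∃ B : AddSubgroup A, IsCompl B (AddSubgroup.zmultiples u) ∧
      ∀ x ∈ B, (∀ y ∈ B, b x y = 1) → x = 0 := by
  classical
  -- symmetry of b
  have hsymm : ∀ x y : A, b x y = b y x := by
    intro x y
    rw [hb, hb, add_comm, mul_right_comm]
  -- b x 0 = 1
  have hb0 : ∀ x : A, b x 0 = 1 := by
    intro x
    have h := hadd2 x 0 0
    rw [add_zero] at h
    have h' : b x 0 * 1 = b x 0 * b x 0 := by rw [mul_one, ← h]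
    exact (mul_left_cancel h').symm
  -- b u y = 1 for all y
  have hbu : ∀ y : A, b u y = 1 := (hrad u).2 (Or.inr rfl)
  -- q 0 = 1
  have hq0 : q 0 = 1 := by
    have h := hb 0 0
    rw [hb0, add_zero] at h
    have h2 : (1 : ℂˣ) = (q 0)⁻¹ := by
      rw [h]; group
    exact inv_eq_one.mp h2.symm
  -- b x x = q x * q x
  have hbxx : ∀ x : A, b x x = q x * q x := by
    intro x
    have h1 : b x x * b x (-x) = 1 := by
      rw [← hadd2, add_neg_cancel, hb0]
    have h2 : b x (-x) = (q x)⁻¹ * (q x)⁻¹ := by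
      rw [hb, add_neg_cancel, hq0, hq, one_mul]
    rw [h2] at h1
    have h3 := eq_inv_of_mul_eq_one_left h1
    rw [h3, mul_inv, inv_inv]
  -- u is not a double
  have hnot2 : ∀ x : A, x + x ≠ u := by
    intro x hx
    have h4 : b x u = 1 := (hsymm x u).trans (hbu x)
    have h5 : b x u = (q x * q x) * (q x * q x) := by
      rw [← hx, hadd2, hbxx]
    have h6 : (q x * q x) * (q x * q x) = 1 := by rw [← h5, h4]
    have h8 := hb x x
    rw [hx, hbxx] at h8
    -- pass to ℂ
    have h8C := congrArg Units.val h8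
    have h6C := congrArg Units.val h6
    simp only [Units.val_mul, Units.val_inv_eq_inv_val, Units.val_one] at h8C h6C
    have hx0 : (q x : ℂ) ≠ 0 := (q x).ne_zero
    rw [hqu] at h8C
    field_simp at h8C
    -- h8C should now say q x * q x * (q x * q x) = -1 (up to arrangement)
    have : (1 : ℂ) = -1 := h6C.symm.trans (by linear_combination h8C)
    norm_num at this
  -- the doubling homomorphism and quotient
  let d : A →+ A :=
    { toFun := fun x => x + x
      map_zero' := by simp
      map_add' := by intro a c; abel }
  have huT : u ∉ d.range := by
    rintro ⟨x, hx⟩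
    exact hnot2 x hx
  letI : Module (ZMod 2) (A ⧸ d.range) :=
    QuotientAddGroup.zmodModule (by
      intro x
      exact ⟨x, by simp [d, two_nsmul]⟩)
  have hvne : (QuotientAddGroup.mk' d.range u) ≠ 0 := by
    simpa [QuotientAddGroup.mk'_apply, QuotientAddGroup.eq_zero_iff] using huT
  obtain ⟨f, hf⟩ : ∃ f : Module.Dual (ZMod 2) (A ⧸ d.range),
      f (QuotientAddGroup.mk' d.range u) ≠ 0 := by
    by_contra h
    push_neg at h
    exact hvne ((Module.forall_dual_apply_eq_zero_iff (ZMod 2) _).mp h)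
  let g : A →+ ZMod 2 := f.toAddMonoidHom.comp (QuotientAddGroup.mk' d.range)
  have hone : ∀ a : ZMod 2, a ≠ 0 → a = 1 := by decide
  have hgu : g u = 1 := hone _ hf
  refine ⟨g.ker, ⟨?_, ?_⟩, ?_⟩
  · -- disjoint
    rw [AddSubgroup.disjoint_def]
    intro x hxB hxZ
    obtain ⟨n, hn⟩ := AddSubgroup.mem_zmultiples_iff.mp hxZ
    rcases Int.even_or_odd n with ⟨k, hk⟩ | ⟨k, hk⟩
    · rw [← hn, hk, add_zsmul, ← smul_add, hu2, smul_zero]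
    · exfalso
      have hxu : x = u := by
        rw [← hn, hk, add_zsmul, mul_comm, mul_zsmul, two_zsmul, hu2, smul_zero,
          zero_add, one_zsmul]
      have : g x = 0 := hxB
      rw [hxu, hgu] at this
      exact one_ne_zero this
  · -- codisjoint
    rw [codisjoint_iff, eq_top_iff]
    intro a _
    by_cases hga : g a = 0
    · exact AddSubgroup.mem_sup_left hga
    · have h1 : g (a - u) = 0 := by
        rw [map_sub, hone _ hga, hgu, sub_self]
      have : a - u + u = a := sub_add_cancel a u
      rw [← this]
      exact AddSubgroup.add_mem _ (AddSubgroup.mem_sup_left h1)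
        (AddSubgroup.mem_sup_right (AddSubgroup.mem_zmultiples u))
  · -- non-degeneracy on B
    intro x hxB hx
    have hxu1 : b x u = 1 := (hsymm x u).trans (hbu x)
    have hxall : ∀ y : A, b x y = 1 := by
      intro y
      by_cases hgy : g y = 0
      · exact hx y hgy
      · have h1 : g (y - u) = 0 := by
          rw [map_sub, hone _ hgy, hgu, sub_self]
        have h2 : b x (y - u) = 1 := hx _ h1
        have h3 := hadd2 x (y - u) u
        rw [sub_add_cancel, h2, hxu1, one_mul] at h3
        exact h3
    rcases (hrad x).mp hxall with h | h
    · exact h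
    · exfalso
      have : g x = 0 := hxB
      rw [h, hgu] at this
      exact one_ne_zero this
end
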